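/- Let F be a field, G₁ and G₂ groups, and G = G₁ × G₂. Let V₁, W₁ be irreducible FG₁-modules and V₂, W₂ irreducible FG₂-modules, and suppose V₁ ⊗_F V₂ ≅ W₁ ⊗_F W₂ as FG-modules (with the outer tensor product action). Then V₁ ≅ W₁ as FG₁-modules and V₂ ≅ W₂ as FG₂-modules. -/

import Mathlib

open scoped TensorProduct DirectSum

section Preliminaries

variable (F : Type*) [Field F]

/-- Isomorphism (equivalence) of representations: an `F`-linear equivalence intertwining
the two actions. -/
def RepIso {G : Type*} [Monoid G] {V V' : Type*} [AddCommMonoid V] [Module F V]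
    [AddCommMonoid V'] [Module F V'] (ρ : Representation F G V) (τ : Representation F G V') :
    Prop :=
  ∃ e : V ≃ₗ[F] V', ∀ (g : G) (v : V), e (ρ g v) = τ g (e v)

/-- Irreducibility of a representation: the space is nonzero and admits no invariant
subspaces other than `⊥` and `⊤`. -/
def IsIrreducibleRep {G : Type*} [Monoid G] {V : Type*} [AddCommMonoid V] [Module F V]
    (ρ : Representation F G V) : Prop :=
  Nontrivial V ∧ ∀ p : Submodule F V, (∀ g : G, ∀ v ∈ p, ρ g v ∈ p) → p = ⊥ ∨ p = ⊤

/-- The subrepresentation on an invariant submodule. -/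
def subRep {G : Type*} [Monoid G] {V : Type*} [AddCommMonoid V] [Module F V]
    (ρ : Representation F G V) (p : Submodule F V) (hp : ∀ g : G, ∀ v ∈ p, ρ g v ∈ p) :
    Representation F G ↥p where
  toFun g := (ρ g).restrict (fun v hv => hp g v hv)
  map_one' := by ext v; simp [LinearMap.restrict_apply]
  map_mul' g₁ g₂ := by ext v; simp [LinearMap.restrict_apply]

/-- A representation is completely reducible if the underlying module is the sum of its
irreducible invariant submodules. -/
def IsCompletelyReducibleRep {G : Type*} [Monoid G] {V : Type*} [AddCommMonoid V]
    [Module F V] (ρ : Representation F G V) : Prop :=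
  sSup {q : Submodule F V |
    ∃ hq : ∀ g : G, ∀ v ∈ q, ρ g v ∈ q, IsIrreducibleRep F (subRep F ρ q hq)} = ⊤

/-- The homogeneous component determined by `σ`: the sum of all irreducible invariant
submodules whose subrepresentation is isomorphic to `σ`. -/
noncomputable def homComponent {G : Type*} [Monoid G] {V W : Type*} [AddCommMonoid V]
    [Module F V] [AddCommMonoid W] [Module F W] (ρ : Representation F G V)
    (σ : Representation F G W) : Submodule F V :=
  sSup {q : Submodule F V |
    ∃ hq : ∀ g : G, ∀ v ∈ q, ρ g v ∈ q,
      IsIrreducibleRep F (subRep F ρ q hq) ∧ RepIso F (subRep F ρ q hq) σ}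

/-- The set of all homogeneous components of a representation. -/
noncomputable def homComponents {G : Type*} [Monoid G] {V : Type*} [AddCommMonoid V]
    [Module F V] (ρ : Representation F G V) : Set (Submodule F V) :=
  {S | ∃ (q : Submodule F V) (hq : ∀ g : G, ∀ v ∈ q, ρ g v ∈ q),
      IsIrreducibleRep F (subRep F ρ q hq) ∧ S = homComponent F ρ (subRep F ρ q hq)}

/-- A representation `ρ` lies over `σ` if it admits an invariant submodule whose
subrepresentation is isomorphic to `σ`. -/
def LiesOver {G : Type*} [Monoid G] {V W : Type*} [AddCommMonoid V] [Module F V]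
    [AddCommMonoid W] [Module F W] (ρ : Representation F G V) (σ : Representation F G W) :
    Prop :=
  ∃ (q : Submodule F V) (hq : ∀ g : G, ∀ v ∈ q, ρ g v ∈ q),
    RepIso F (subRep F ρ q hq) σ

/-- The stabilizer in `G` of a subspace of a representation space. -/
def stabSubgroup {G : Type*} [Group G] {V : Type*} [AddCommGroup V] [Module F V]
    (ρ : Representation F G V) (S : Submodule F V) : Subgroup G where
  carrier := {g : G | S.map (ρ g) = S}
  one_mem' := by
    show S.map (ρ 1) = S
    rw [map_one, Module.End.one_eq_id]
    exact Submodule.map_id S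
  mul_mem' := by
    intro a b ha hb
    show S.map (ρ (a * b)) = S
    rw [map_mul, Module.End.mul_eq_comp, Submodule.map_comp, hb, ha]
  inv_mem' := by
    intro a ha
    show S.map (ρ a⁻¹) = S
    conv_lhs => rw [← ha]
    rw [← Submodule.map_comp, ← Module.End.mul_eq_comp, ← map_mul, inv_mul_cancel, map_one,
      Module.End.one_eq_id, Submodule.map_id]

theorem stabSubgroup_mapsTo {G : Type*} [Group G] {V : Type*} [AddCommGroup V] [Module F V]
    (ρ : Representation F G V) (S : Submodule F V) :
    ∀ g : ↥(stabSubgroup F ρ S), ∀ v ∈ S, ρ (g : G) v ∈ S := by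
  intro g v hv
  have hg : S.map (ρ (g : G)) = S := g.2
  have := Submodule.mem_map_of_mem (f := ρ (g : G)) hv
  rwa [hg] at this

/-- Outer tensor product of representations of two groups. -/
noncomputable def outerRep {G₁ G₂ : Type*} [Monoid G₁] [Monoid G₂] {V₁ V₂ : Type*}
    [AddCommMonoid V₁] [Module F V₁] [AddCommMonoid V₂] [Module F V₂]
    (ρ₁ : Representation F G₁ V₁) (ρ₂ : Representation F G₂ V₂) :
    Representation F (G₁ × G₂) (V₁ ⊗[F] V₂) :=
  Representation.tprod (ρ₁.comp (MonoidHom.fst G₁ G₂)) (ρ₂.comp (MonoidHom.snd G₁ G₂))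

/-- A projective representation with factor set `α`. -/
def IsProjRep {G : Type*} [Group G] {W : Type*} [AddCommGroup W] [Module F W]
    (X : G → (W →ₗ[F] W)) (α : G → G → Fˣ) : Prop :=
  (∀ g : G, Function.Bijective (X g)) ∧
    ∀ g₁ g₂ : G, (X g₁) ∘ₗ (X g₂) = ((α g₁ g₂ : F)) • X (g₁ * g₂)

/-- Irreducibility of a projective representation: no proper nonzero invariant subspace. -/
def IsProjIrred {G : Type*} [Group G] {W : Type*} [AddCommGroup W] [Module F W]
    (X : G → (W →ₗ[F] W)) : Prop :=
  Nontrivial W ∧ ∀ p : Submodule F W, (∀ g : G, ∀ w ∈ p, X g w ∈ p) → p = ⊥ ∨ p = ⊤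

/-- `D` is a system of representatives for the `(H₁,H₂)`-double cosets in `G`. -/
def IsDCosetReps {G : Type*} [Group G] (H₁ H₂ : Subgroup G) (D : Set G) : Prop :=
  ∀ g : G, ∃! d : G, d ∈ D ∧ ∃ h₁ ∈ H₁, ∃ h₂ ∈ H₂, g = h₁ * d * h₂

end Preliminaries

section Induction

variable (F : Type*) [Field F] {G : Type*} [Group G] (H : Subgroup G)
variable {W : Type*} [AddCommGroup W] [Module F W] (σ : Representation F ↥H W)

/-- The submodule of relations defining the induced module `FG ⊗_{FH} W` as a quotient
of `FG ⊗_F W`. -/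
noncomputable def indRel : Submodule (MonoidAlgebra F G) (MonoidAlgebra F G ⊗[F] W) :=
  Submodule.span (MonoidAlgebra F G)
    {z | ∃ (x : H) (w : W),
      z = (MonoidAlgebra.single (x : G) (1 : F)) ⊗ₜ[F] w
            - (1 : MonoidAlgebra F G) ⊗ₜ[F] (σ x w)}

/-- The underlying space of the induced module `ind_H^G W = FG ⊗_{FH} W`. -/
noncomputable def IndCar := (MonoidAlgebra F G ⊗[F] W) ⧸ indRel F H σ

noncomputable instance : AddCommGroup (IndCar F H σ) :=
  inferInstanceAs (AddCommGroup ((MonoidAlgebra F G ⊗[F] W) ⧸ indRel F H σ))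

noncomputable instance : Module (MonoidAlgebra F G) (IndCar F H σ) :=
  inferInstanceAs (Module (MonoidAlgebra F G) ((MonoidAlgebra F G ⊗[F] W) ⧸ indRel F H σ))

noncomputable instance : Module F (IndCar F H σ) :=
  inferInstanceAs (Module F ((MonoidAlgebra F G ⊗[F] W) ⧸ indRel F H σ))

noncomputable instance : IsScalarTower F (MonoidAlgebra F G) (IndCar F H σ) :=
  inferInstanceAs (IsScalarTower F (MonoidAlgebra F G)
    ((MonoidAlgebra F G ⊗[F] W) ⧸ indRel F H σ))

/-- The induced representation of `G` on `ind_H^G W = FG ⊗_{FH} W`. -/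
noncomputable def IndRep : Representation F G (IndCar F H σ) where
  toFun g :=
    { toFun := fun v => (MonoidAlgebra.single g (1 : F) : MonoidAlgebra F G) • v
      map_add' := fun a b => smul_add _ a b
      map_smul' := fun c v => smul_comm _ c v }
  map_one' := by
    ext v
    show MonoidAlgebra.single (1 : G) (1 : F) • v = v
    rw [← MonoidAlgebra.one_def, one_smul]
  map_mul' g₁ g₂ := by
    ext v
    show MonoidAlgebra.single (g₁ * g₂) (1 : F) • v = _
    rw [show (MonoidAlgebra.single (g₁ * g₂) (1 : F) : MonoidAlgebra F G)
          = MonoidAlgebra.single g₁ 1 * MonoidAlgebra.single g₂ 1 by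
        rw [MonoidAlgebra.single_mul_single, one_mul], mul_smul]
    rfl

end Induction

section DirectSums

variable (F : Type*) [Field F] {G : Type*} [Monoid G]

/-- The direct sum of a family of representations. -/
noncomputable def dsumRep {ι : Type*} {V : ι → Type*} [∀ i, AddCommGroup (V i)]
    [∀ i, Module F (V i)] (ρ : ∀ i, Representation F G (V i)) :
    Representation F G (⨁ i, V i) where
  toFun g := DFinsupp.mapRange.linearMap (fun i => ρ i g)
  map_one' := by
    simp only [map_one]
    exact DFinsupp.mapRange.linearMap_id
  map_mul' g₁ g₂ := by
    simp only [map_mul, Module.End.mul_eq_comp]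
    exact DFinsupp.mapRange.linearMap_comp (fun i => ρ i g₁) (fun i => ρ i g₂)

end DirectSums

section Conjugation

variable {G : Type*} [Group G]

/-- Conjugation `x ↦ g x g⁻¹` as a monoid homomorphism of a normal subgroup. -/
def conjHom {N : Subgroup G} (hN : N.Normal) (g : G) : ↥N →* ↥N where
  toFun x := ⟨g * (x : G) * g⁻¹, hN.conj_mem x.1 x.2 g⟩
  map_one' := by ext; simp
  map_mul' x y := by ext; simp [mul_assoc]

/-- The conjugate subgroup `xHx⁻¹`. -/
def conjSubgroup (x : G) (H : Subgroup G) : Subgroup G :=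
  H.map (MulAut.conj x).toMonoidHom

/-- Conjugating back: the homomorphism `K → H`, `k ↦ x⁻¹ k x`, for `K ≤ xHx⁻¹`. -/
def unconjHom (x : G) (H : Subgroup G) {K : Subgroup G} (hK : K ≤ conjSubgroup x H) :
    ↥K →* ↥H where
  toFun k := ⟨x⁻¹ * (k : G) * x, by
    obtain ⟨h, hh, e⟩ := hK k.2
    have : x⁻¹ * (k : G) * x = h := by
      rw [← e]; simp [MulAut.conj_apply, mul_assoc]
    rw [this]; exact hh⟩
  map_one' := by ext; simp
  map_mul' a b := by
    ext
    show x⁻¹ * (↑a * ↑b) * x = (x⁻¹ * ↑a * x) * (x⁻¹ * ↑b * x)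
    group

/-- The homomorphism `K ∩ xHx⁻¹ → H` (with the source regarded as a subgroup of `K`),
given by `k ↦ x⁻¹ k x`. -/
def mackeyHom (x : G) (H K : Subgroup G) :
    ↥((K ⊓ conjSubgroup x H).subgroupOf K) →* ↥H where
  toFun l := ⟨x⁻¹ * ((l : ↥K) : G) * x, by
    have h2 : ((l : ↥K) : G) ∈ K ⊓ conjSubgroup x H := l.2
    obtain ⟨h, hh, e⟩ := h2.2
    have : x⁻¹ * ((l : ↥K) : G) * x = h := by
      rw [← e]; simp [MulAut.conj_apply, mul_assoc]
    rw [this]; exact hh⟩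
  map_one' := by ext; simp
  map_mul' a b := by
    ext
    show x⁻¹ * (↑↑a * ↑↑b) * x = (x⁻¹ * ↑↑a * x) * (x⁻¹ * ↑↑b * x)
    group

end Conjugation

section AuxProof

variable (F : Type*) [Field F]

/-- Schur: a nonzero equivariant map between irreducible representations is an iso. -/
lemma schur_iso {G : Type*} [Monoid G] {V W : Type*} [AddCommGroup V] [Module F V]
    [AddCommGroup W] [Module F W] (ρ : Representation F G V) (σ : Representation F G W)
    (hρ : IsIrreducibleRep F ρ) (hσ : IsIrreducibleRep F σ)
    (f : V →ₗ[F] W) (hf : ∀ g v, f (ρ g v) = σ g (f v))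
    (v₀ : V) (hv₀ : f v₀ ≠ 0) : RepIso F ρ σ := by
  have hker : LinearMap.ker f = ⊥ := by
    rcases hρ.2 (LinearMap.ker f) (fun g v hv => by
      simp only [LinearMap.mem_ker] at *; rw [hf, hv, map_zero]) with h | h
    · exact h
    · exfalso; apply hv₀
      have : v₀ ∈ LinearMap.ker f := h ▸ Submodule.mem_top
      simpa using this
  have hrange : LinearMap.range f = ⊤ := by
    rcases hσ.2 (LinearMap.range f) (fun g w hw => by
      obtain ⟨v, rfl⟩ := hw; exact ⟨ρ g v, hf g v⟩) with h | h
    · exfalso; exact hv₀ (by have : f v₀ ∈ LinearMap.range f := ⟨v₀, rfl⟩; simpa [h] using this)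
    · exact h
  exact ⟨LinearEquiv.ofBijective f ⟨LinearMap.ker_eq_bot.1 hker,
    LinearMap.range_eq_top.1 hrange⟩, fun g v => hf g v⟩

/-- Key lemma: if the outer tensor products are isomorphic then the first factors are
isomorphic. -/
lemma outer_first_factor {G₁ G₂ : Type*} [Group G₁] [Group G₂]
    {V₁ W₁ V₂ W₂ : Type*} [AddCommGroup V₁] [Module F V₁] [AddCommGroup W₁] [Module F W₁]
    [AddCommGroup V₂] [Module F V₂] [AddCommGroup W₂] [Module F W₂]
    (ρV₁ : Representation F G₁ V₁) (ρW₁ : Representation F G₁ W₁)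
    (ρV₂ : Representation F G₂ V₂) (ρW₂ : Representation F G₂ W₂)
    (hV₁ : IsIrreducibleRep F ρV₁) (hW₁ : IsIrreducibleRep F ρW₁)
    (hV₂ : Nontrivial V₂)
    (h : RepIso F (outerRep F ρV₁ ρV₂) (outerRep F ρW₁ ρW₂)) :
    RepIso F ρV₁ ρW₁ := by
  obtain ⟨e, he⟩ := h
  -- equivariance for the first factor only
  have he1 : ∀ (g : G₁) (x : V₁ ⊗[F] V₂),
      e (TensorProduct.map (ρV₁ g) LinearMap.id x)
        = TensorProduct.map (ρW₁ g) LinearMap.id (e x) := by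
    intro g x
    have := he (g, 1) x
    simpa [outerRep, Representation.tprod_apply, Module.End.one_eq_id] using this
  classical
  let bV := Module.Basis.ofVectorSpace F V₂
  let bW := Module.Basis.ofVectorSpace F W₂
  let EV : V₁ ⊗[F] V₂ ≃ₗ[F] (_ →₀ V₁) :=
    (LinearEquiv.lTensor V₁ bV.repr) ≪≫ₗ TensorProduct.finsuppScalarRight F F V₁ _
  let EW : W₁ ⊗[F] W₂ ≃ₗ[F] (_ →₀ W₁) :=
    (LinearEquiv.lTensor W₁ bW.repr) ≪≫ₗ TensorProduct.finsuppScalarRight F F W₁ _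
  have hEVtmul : ∀ (v₁ : V₁) (v₂ : V₂) i, EV (v₁ ⊗ₜ[F] v₂) i = bV.repr v₂ i • v₁ := by
    intro v₁ v₂ i
    simp [EV, LinearEquiv.lTensor, TensorProduct.congr_tmul]
  have hEWtmul : ∀ (w₁ : W₁) (w₂ : W₂) i, EW (w₁ ⊗ₜ[F] w₂) i = bW.repr w₂ i • w₁ := by
    intro w₁ w₂ i
    simp [EW, LinearEquiv.lTensor, TensorProduct.congr_tmul]
  -- coordinate equivariance of EW
  have hEW : ∀ (A : W₁ →ₗ[F] W₁) (u : W₁ ⊗[F] W₂) i,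
      EW (TensorProduct.map A LinearMap.id u) i = A (EW u i) := by
    intro A u i
    induction u using TensorProduct.induction_on with
    | zero => simp
    | tmul w₁ w₂ => simp [hEWtmul, TensorProduct.map_tmul]
    | add x y hx hy => simp only [map_add, Finsupp.add_apply, hx, hy]
  -- a nonzero pure tensor
  haveI := hV₁.1
  obtain ⟨v₀, hv₀⟩ := exists_ne (0 : V₁)
  obtain ⟨j⟩ : Nonempty _ := bV.index_nonempty
  have hx₀ : (v₀ ⊗ₜ[F] (bV j : V₂)) ≠ 0 := by
    intro hx
    apply hv₀
    have := congrArg (fun z => EV z j) hx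
    simpa [hEVtmul, Module.Basis.repr_self] using this
  have hex₀ : e (v₀ ⊗ₜ[F] (bV j : V₂)) ≠ 0 := by
    simpa [LinearEquiv.map_eq_zero_iff] using hx₀
  have hEWex₀ : EW (e (v₀ ⊗ₜ[F] (bV j : V₂))) ≠ 0 := by
    simpa [LinearEquiv.map_eq_zero_iff] using hex₀
  obtain ⟨i, hi⟩ : ∃ i, EW (e (v₀ ⊗ₜ[F] (bV j : V₂))) i ≠ 0 := by
    by_contra hcon
    push_neg at hcon
    exact hEWex₀ (Finsupp.ext fun i => hcon i)
  -- the equivariant map V₁ → W₁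
  let f : V₁ →ₗ[F] W₁ :=
    (Finsupp.lapply i) ∘ₗ EW.toLinearMap ∘ₗ e.toLinearMap
      ∘ₗ ((TensorProduct.mk F V₁ V₂).flip (bV j))
  have hfapp : ∀ v : V₁, f v = EW (e (v ⊗ₜ[F] (bV j : V₂))) i := fun v => rfl
  have hf : ∀ (g : G₁) (v : V₁), f (ρV₁ g v) = ρW₁ g (f v) := by
    intro g v
    rw [hfapp, hfapp]
    have h1 : (ρV₁ g v) ⊗ₜ[F] (bV j : V₂)
        = TensorProduct.map (ρV₁ g) LinearMap.id (v ⊗ₜ[F] (bV j : V₂)) := by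
      simp [TensorProduct.map_tmul]
    rw [h1, he1, hEW]
  exact schur_iso F ρV₁ ρW₁ hV₁ hW₁ f hf v₀ (by rw [hfapp]; exact hi)

end AuxProof

/-- Theorem 3.11(c): let `G = G₁ × G₂`, let `V₁, W₁` be irreducible `FG₁`-modules and
`V₂, W₂` irreducible `FG₂`-modules with `V₁ ⊗_F V₂ ≅ W₁ ⊗_F W₂` as `FG`-modules (outer
tensor products).  Then `V₁ ≅ W₁` as `FG₁`-modules and `V₂ ≅ W₂` as `FG₂`-modules. -/
theorem outer_tensor_cancellation
    (F : Type*) [Field F] (G₁ G₂ : Type*) [Group G₁] [Group G₂]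
    (V₁ : Type*) [AddCommGroup V₁] [Module F V₁] (ρV₁ : Representation F G₁ V₁)
    (W₁ : Type*) [AddCommGroup W₁] [Module F W₁] (ρW₁ : Representation F G₁ W₁)
    (V₂ : Type*) [AddCommGroup V₂] [Module F V₂] (ρV₂ : Representation F G₂ V₂)
    (W₂ : Type*) [AddCommGroup W₂] [Module F W₂] (ρW₂ : Representation F G₂ W₂)
    (hV₁ : IsIrreducibleRep F ρV₁) (hW₁ : IsIrreducibleRep F ρW₁)
    (hV₂ : IsIrreducibleRep F ρV₂) (hW₂ : IsIrreducibleRep F ρW₂)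
    (h : RepIso F (outerRep F ρV₁ ρV₂) (outerRep F ρW₁ ρW₂)) :
    RepIso F ρV₁ ρW₁ ∧ RepIso F ρV₂ ρW₂ := by
  have h' : RepIso F (outerRep F ρV₂ ρV₁) (outerRep F ρW₂ ρW₁) := by
    obtain ⟨e, he⟩ := h
    refine ⟨(TensorProduct.comm F V₂ V₁) ≪≫ₗ e ≪≫ₗ (TensorProduct.comm F W₁ W₂), ?_⟩
    rintro ⟨g₂, g₁⟩ x
    induction x using TensorProduct.induction_on with
    | zero => simp
    | tmul v₂ v₁ =>
      have := he (g₁, g₂) (v₁ ⊗ₜ[F] v₂)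
      simp only [outerRep, Representation.tprod_apply, LinearEquiv.trans_apply,
        TensorProduct.comm_tmul, MonoidHom.comp_apply, MonoidHom.coe_fst,
        MonoidHom.coe_snd, TensorProduct.map_tmul] at this ⊢
      rw [this, TensorProduct.map_comm]
    | add x y hx hy => simp only [map_add, hx, hy]
  exact ⟨outer_first_factor F ρV₁ ρW₁ ρV₂ ρW₂ hV₁ hW₁ hV₂.1 h,
    outer_first_factor F ρV₂ ρW₂ ρV₁ ρW₁ hV₂ hW₂ hV₁.1 h'⟩
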